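/- The four physical source term vectors δR¹ = (1, u_x, u_y, H), δR² = (0, −ρu_y, ρu_x, 0), δR³ = (−1/(2H), 0, 0, 1/2), δR⁴ = (1/p₀)((γ−1)/γ + 1/(γM²), u_x((γ−1)/γ + 2/(γM²)), u_y((γ−1)/γ + 2/(γM²)), H((γ−1)/γ + 1/(γM²))) are linearly independent in ℝ⁴, provided ρ > 0, H > 0, p₀ > 0, M > 0 and (u_x, u_y) ≠ (0,0). -/

import Mathlib

set_option maxHeartbeats 1000000

/- The four Giles–Pierce physical source term vectors δR¹, δR², δR³, δR⁴ are linearly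
independent in ℝ⁴, provided ρ > 0, H > 0, p₀ > 0, M > 0, γ > 1 and (u_x,u_y) ≠ (0,0). -/
theorem giles_pierce_sources_linearIndependent (γ ρ u v H M p0 : ℝ)
    (hγ : 1 < γ) (hρ : 0 < ρ) (hH : 0 < H) (hp0 : 0 < p0) (hM : 0 < M)
    (hU : (u, v) ≠ (0, 0)) :
    LinearIndependent ℝ
      ![(![1, u, v, H] : Fin 4 → ℝ),
        ![0, -(ρ*v), ρ*u, 0],
        ![-(1/(2*H)), 0, 0, 1/2],
        ![(1/p0) * ((γ-1)/γ + 1/(γ*M^2)),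
          (u/p0) * ((γ-1)/γ + 2/(γ*M^2)),
          (v/p0) * ((γ-1)/γ + 2/(γ*M^2)),
          (H/p0) * ((γ-1)/γ + 1/(γ*M^2))]] := by
  rw [show (![(![1, u, v, H] : Fin 4 → ℝ),
        ![0, -(ρ*v), ρ*u, 0],
        ![-(1/(2*H)), 0, 0, 1/2],
        ![(1/p0) * ((γ-1)/γ + 1/(γ*M^2)),
          (u/p0) * ((γ-1)/γ + 2/(γ*M^2)),
          (v/p0) * ((γ-1)/γ + 2/(γ*M^2)),
          (H/p0) * ((γ-1)/γ + 1/(γ*M^2))]]) = fun i =>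
      (Matrix.of ![(![1, u, v, H] : Fin 4 → ℝ),
        ![0, -(ρ*v), ρ*u, 0],
        ![-(1/(2*H)), 0, 0, 1/2],
        ![(1/p0) * ((γ-1)/γ + 1/(γ*M^2)),
          (u/p0) * ((γ-1)/γ + 2/(γ*M^2)),
          (v/p0) * ((γ-1)/γ + 2/(γ*M^2)),
          (H/p0) * ((γ-1)/γ + 1/(γ*M^2))]]) i from rfl]
  change LinearIndependent ℝ (Matrix.row (Matrix.of _))
  rw [Matrix.linearIndependent_rows_iff_isUnit, Matrix.isUnit_iff_isUnit_det,
    isUnit_iff_ne_zero]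
  rw [Matrix.det_succ_row_zero]; simp only [Fin.sum_univ_four, Matrix.det_fin_three, Matrix.submatrix_apply]; simp (config := {decide := true}) [Fin.succAbove]
  have hγ0 : γ ≠ 0 := by linarith
  have hM0 : M ≠ 0 := ne_of_gt hM
  have hH0 : H ≠ 0 := ne_of_gt hH
  have hp00 : p0 ≠ 0 := ne_of_gt hp0
  have hu2 : 0 < u^2 + v^2 := by
    have h : u ≠ 0 ∨ v ≠ 0 := by
      by_contra h; push_neg at h; exact hU (by simp [h.1, h.2])
    rcases h with h | h
    · positivity
    · positivity
  intro h
  apply absurd h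
  have key : ρ * v * (1 / 2 * (v / p0 * ((γ - 1) / γ + 2 / (γ * M ^ 2)))) +
          ρ * u * (1 / 2 * (u / p0 * ((γ - 1) / γ + 2 / (γ * M ^ 2)))) +
        (u * (ρ * u * (-(H⁻¹ * (1 / 2) * (H / p0 * ((γ - 1) / γ + (M ^ 2)⁻¹ * γ⁻¹))) +
                -(1 / 2 * (p0⁻¹ * ((γ - 1) / γ + (M ^ 2)⁻¹ * γ⁻¹))))) +
          (v * (ρ * v * (-(H⁻¹ * (1 / 2) * (H / p0 * ((γ - 1) / γ + (M ^ 2)⁻¹ * γ⁻¹))) +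
                  -(1 / 2 * (p0⁻¹ * ((γ - 1) / γ + (M ^ 2)⁻¹ * γ⁻¹))))) +
            -(H * (-(ρ * v * (H⁻¹ * (1 / 2) * (v / p0 * ((γ - 1) / γ + 2 / (γ * M ^ 2))))) +
                  -(ρ * u * (H⁻¹ * (1 / 2) * (u / p0 * ((γ - 1) / γ + 2 / (γ * M ^ 2))))))))) =
      ρ * (u ^ 2 + v ^ 2) / (p0 * γ * M ^ 2) := by
    field_simp
    ring
  have hpos : 0 < ρ * (u ^ 2 + v ^ 2) / (p0 * γ * M ^ 2) := by positivity
  convert hpos.ne' using 2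
  field_simp
  ring
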